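/- The function g(z) := ∫_E log(z − x) ρ(x) dx admits one-sided boundary values on the real line: for every real z with z ≠ ±√2, the limits g_±(z) := lim_{ε↓0} g(z ± iε) exist, and (i) if z < −√2 then g_±(z) = ∫_E ln|z − x| ρ(x) dx ± iπ·∫_E ρ(x) dx; (ii) if z ∈ (−√2, √2) then g_±(z) = ∫_E ln|z − x| ρ(x) dx ± iπ·∫_z^{√2} ρ(x) dx; (iii) if z > √2 then g_±(z) = ∫_E ln|z − x| ρ(x) dx. -/

import Mathlib

open MeasureTheory Set Filter Topology

/-- The spectral interval `E = [-√2, √2]`. -/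
noncomputable def E : Set ℝ := Icc (-Real.sqrt 2) (Real.sqrt 2)

/-- The g-function `g(z) = ∫_E log(z - x) ρ(x) dx`, with the principal branch
of the complex logarithm. -/
noncomputable def gfun (ρ : ℝ → ℝ) (z : ℂ) : ℂ :=
  ∫ x in E, (ρ x : ℂ) * Complex.log (z - (x : ℂ))

lemma hE_meas : MeasurableSet E := measurableSet_Icc

lemma hE_le : -Real.sqrt 2 ≤ Real.sqrt 2 := by linarith [Real.sqrt_nonneg 2]

lemma abs_log_le (A t : ℝ) (hA : 0 < A) (hAt : A ≤ t) (htA : t ≤ A + 1) :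
    |Real.log t| ≤ |Real.log A| + Real.log (A + 1) := by
  have ht : 0 < t := lt_of_lt_of_le hA hAt
  have h1 : Real.log A ≤ Real.log t := Real.log_le_log hA hAt
  have h2 : Real.log t ≤ Real.log (A + 1) := Real.log_le_log ht htA
  have h3 : 0 ≤ Real.log (A + 1) := Real.log_nonneg (by linarith)
  rcases abs_cases (Real.log t) with ⟨h, _⟩ | ⟨h, _⟩ <;>
    rcases abs_cases (Real.log A) with ⟨h', _⟩ | ⟨h', _⟩ <;> linarith

lemma log_abs_bound (x : ℝ) (hx : 0 < x) :
    |Real.log x| ≤ 2 * x ^ (-(1:ℝ)/2) + 2 * x ^ ((1:ℝ)/2) := by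
  have hp : (0:ℝ) < x ^ ((1:ℝ)/2) := Real.rpow_pos_of_pos hx _
  have hn : (0:ℝ) < x ^ (-(1:ℝ)/2) := Real.rpow_pos_of_pos hx _
  rcases le_or_gt 1 x with h | h
  · have hl : 0 ≤ Real.log x := Real.log_nonneg h
    have heq : Real.log (x ^ ((1:ℝ)/2)) = ((1:ℝ)/2) * Real.log x := Real.log_rpow hx ((1:ℝ)/2)
    have hle : Real.log (x ^ ((1:ℝ)/2)) ≤ x ^ ((1:ℝ)/2) - 1 := Real.log_le_sub_one_of_pos hp
    rw [abs_of_nonneg hl]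
    linarith
  · have hl : Real.log x ≤ 0 := Real.log_nonpos (le_of_lt hx) (le_of_lt h)
    have heq : Real.log (x ^ (-(1:ℝ)/2)) = (-(1:ℝ)/2) * Real.log x := Real.log_rpow hx (-(1:ℝ)/2)
    have hle : Real.log (x ^ (-(1:ℝ)/2)) ≤ x ^ (-(1:ℝ)/2) - 1 := Real.log_le_sub_one_of_pos hn
    rw [abs_of_nonpos hl]
    linarith

lemma II_log_abs (a b : ℝ) : IntervalIntegrable (fun x => Real.log |x|) volume a b := by
  have key : ∀ c : ℝ, 0 ≤ c → IntervalIntegrable (fun x => Real.log |x|) volume 0 c := by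
    intro c hc
    rw [intervalIntegrable_iff_integrableOn_Ioc_of_le hc]
    have hg : IntegrableOn (fun x : ℝ => 2 * x ^ (-(1:ℝ)/2) + 2 * x ^ ((1:ℝ)/2)) (Ioc 0 c) := by
      have h1 := (intervalIntegral.intervalIntegrable_rpow'
        (a := 0) (b := c) (r := -(1:ℝ)/2) (by norm_num))
      have h2 := (intervalIntegral.intervalIntegrable_rpow'
        (a := 0) (b := c) (r := (1:ℝ)/2) (by norm_num))
      rw [intervalIntegrable_iff_integrableOn_Ioc_of_le hc] at h1 h2
      exact (h1.const_mul 2).add (h2.const_mul 2)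
    refine Integrable.mono' hg ((Real.measurable_log.comp measurable_abs).aestronglyMeasurable) ?_
    refine (ae_restrict_iff' measurableSet_Ioc).2 (ae_of_all _ fun x hx => ?_)
    have hx0 : 0 < x := hx.1
    rw [Real.norm_eq_abs, abs_of_pos hx0]
    exact log_abs_bound x hx0
  have key' : ∀ c : ℝ, IntervalIntegrable (fun x => Real.log |x|) volume 0 c := by
    intro c
    rcases le_or_gt 0 c with h | h
    · exact key c h
    · have h1 := key (-c) (by linarith)
      have h2 : IntervalIntegrable (fun x : ℝ => Real.log |(-x)|) volume (-0) (-(-c)) :=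
        (IntervalIntegrable.iff_comp_neg (f := fun x => Real.log |x|) (a := 0) (b := -c)).mp h1
      simpa using h2
  exact (key' a).symm.trans (key' b)

lemma II_log_sub (z a b : ℝ) : IntervalIntegrable (fun x => Real.log |x - z|) volume a b := by
  simpa using (II_log_abs (a - z) (b - z)).comp_sub_right z

lemma IntOn_log (z : ℝ) : IntegrableOn (fun x => abs (Real.log |z - x|)) E volume := by
  have h := (II_log_sub z (-Real.sqrt 2) (Real.sqrt 2)).abs
  rw [intervalIntegrable_iff_integrableOn_Icc_of_le hE_le] at h
  have heq : (fun x => abs (Real.log |z - x|)) = fun x => abs (Real.log |x - z|) := by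
    funext x; rw [abs_sub_comm]
  rw [heq]; exact h

lemma IntOn_log_mul (z : ℝ) (ρ : ℝ → ℝ) (hcont : Continuous ρ)
    (hsupp : ∀ x, x ∉ E → ρ x = 0) :
    IntegrableOn (fun x => Real.log |z - x| * ρ x) E volume := by
  obtain ⟨C, hC⟩ := (HasCompactSupport.intro isCompact_Icc hsupp :
      HasCompactSupport ρ).exists_bound_of_continuous hcont
  have hlog : IntegrableOn (fun x => Real.log |z - x|) E volume := by
    have h := II_log_sub z (-Real.sqrt 2) (Real.sqrt 2)
    rw [intervalIntegrable_iff_integrableOn_Icc_of_le hE_le] at h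
    have heq : (fun x => Real.log |z - x|) = fun x => Real.log |x - z| := by
      funext x; rw [abs_sub_comm]
    rw [heq]; exact h
  have := Integrable.bdd_mul (f := fun x => ρ x) (g := fun x => Real.log |z - x|)
    hlog (hcont.aestronglyMeasurable.restrict) (ae_of_all _ hC)
  simpa [mul_comm, IntegrableOn] using this

lemma log_tendsto_upper (c : ℝ) (hc : c ≠ 0) :
    Tendsto (fun ε : ℝ => Complex.log ((c : ℂ) + ε * Complex.I)) (𝓝[>] 0)
      (𝓝 ((Real.log |c| : ℂ) + if c < 0 then (Real.pi : ℂ) * Complex.I else 0)) := by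
  have hpath : Tendsto (fun ε : ℝ => (c : ℂ) + ε * Complex.I) (𝓝[>] 0) (𝓝 (c : ℂ)) := by
    have hcont : Continuous fun ε : ℝ => (c : ℂ) + ε * Complex.I := by continuity
    have h0 := hcont.tendsto 0
    simp only [Complex.ofReal_zero, zero_mul, add_zero] at h0
    exact h0.mono_left nhdsWithin_le_nhds
  rcases lt_or_gt_of_ne hc with hneg | hpos
  · have key := Complex.tendsto_log_nhdsWithin_im_nonneg_of_re_neg_of_im_zero
      (z := (c : ℂ)) (by simpa using hneg) (by simp)
    have hmem : ∀ᶠ ε : ℝ in 𝓝[>] 0, (c : ℂ) + (ε:ℂ) * Complex.I ∈ {w : ℂ | 0 ≤ w.im} := by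
      filter_upwards [self_mem_nhdsWithin] with ε hε
      simp [le_of_lt (mem_Ioi.mp hε)]
    have hcomp : Tendsto (fun ε : ℝ => (c : ℂ) + ε * Complex.I) (𝓝[>] 0)
        (𝓝[{w : ℂ | 0 ≤ w.im}] (c : ℂ)) := tendsto_nhdsWithin_iff.mpr ⟨hpath, hmem⟩
    have h := key.comp hcomp
    simp only [if_pos hneg]
    simpa [Function.comp_def] using h
  · have key : ContinuousAt Complex.log (c : ℂ) :=
      continuousAt_clog (by simp [Complex.mem_slitPlane_iff, hpos])
    have h := key.tendsto.comp hpath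
    simp only [if_neg (not_lt.mpr (le_of_lt hpos))]
    rw [← Complex.ofReal_log (le_of_lt hpos)] at h
    simpa [abs_of_pos hpos, Function.comp_def] using h

lemma tendsto_plus (ρ : ℝ → ℝ) (hcont : Continuous ρ) (hsupp : ∀ x, x ∉ E → ρ x = 0) (z : ℝ) :
    Tendsto (fun ε : ℝ => gfun ρ ((z : ℂ) + (ε : ℂ) * Complex.I)) (𝓝[>] 0)
      (𝓝 (∫ x in E, (ρ x : ℂ) *
        ((Real.log |z - x| : ℂ) + if z < x then (Real.pi : ℂ) * Complex.I else 0))) := by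
  obtain ⟨C, hC⟩ := (HasCompactSupport.intro isCompact_Icc hsupp :
      HasCompactSupport ρ).exists_bound_of_continuous hcont
  have hzne : ∀ᵐ x ∂(volume.restrict E), x ≠ z :=
    ae_restrict_of_ae (by
      refine ae_iff.mpr ?_
      simpa using measure_singleton (μ := (volume : Measure ℝ)) z)
  refine MeasureTheory.tendsto_integral_filter_of_dominated_convergence
    (fun x => |ρ x| * (abs (Real.log |z - x|) + Real.log (|z - x| + 1) + Real.pi)) ?_ ?_ ?_ ?_
  · filter_upwards [self_mem_nhdsWithin] with ε hε
    have hpath : Continuous fun x : ℝ => (z : ℂ) + (ε:ℂ) * Complex.I - (x:ℂ) := by continuity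
    have hlog : Continuous fun x : ℝ => Complex.log ((z : ℂ) + (ε:ℂ) * Complex.I - (x:ℂ)) := by
      refine hpath.clog fun x => ?_
      refine Complex.mem_slitPlane_iff.mpr (Or.inr ?_)
      simpa using ne_of_gt (mem_Ioi.mp hε)
    exact ((Complex.continuous_ofReal.comp hcont).mul hlog).aestronglyMeasurable.restrict
  · filter_upwards [Ioc_mem_nhdsGT_of_mem (Set.mem_Ico.mpr ⟨le_rfl, zero_lt_one⟩)] with ε hε
    filter_upwards [hzne] with x hx
    have hε0 : 0 < ε := hε.1
    have hε1 : ε ≤ 1 := hε.2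
    set w : ℂ := (z : ℂ) + (ε:ℂ) * Complex.I - (x:ℂ) with hw
    have hre : w.re = z - x := by simp [hw]
    have him : w.im = ε := by simp [hw]
    have hA : 0 < |z - x| := by
      rw [abs_pos, sub_ne_zero]; exact fun h => hx h.symm
    have hAt : |z - x| ≤ ‖w‖ := by
      have h := Complex.abs_re_le_norm w; rwa [hre] at h
    have htA : ‖w‖ ≤ |z - x| + 1 := by
      have h := Complex.norm_le_abs_re_add_abs_im w
      rw [hre, him] at h
      rw [abs_of_pos hε0] at h; linarith
    rw [norm_mul, Complex.norm_real, Real.norm_eq_abs]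
    refine mul_le_mul_of_nonneg_left ?_ (abs_nonneg _)
    have h1 : ‖Complex.log w‖ ≤ |Real.log (‖w‖)| + |Complex.arg w| := by
      have h := Complex.norm_le_abs_re_add_abs_im (Complex.log w)
      rwa [Complex.log_re, Complex.log_im] at h
    have h2 := abs_log_le (|z - x|) (‖w‖) hA hAt htA
    have h3 := Complex.abs_arg_le_pi w
    linarith
  · have h1 : IntegrableOn
        (fun x => abs (Real.log |z - x|) + (Real.log (|z - x| + 1) + Real.pi)) E volume := by
      refine (IntOn_log z).add ?_
      refine (Continuous.integrableOn_Icc ?_)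
      have hc1 : Continuous fun x : ℝ => |z - x| + 1 := by continuity
      exact (hc1.log (fun x => by positivity)).add continuous_const
    have := Integrable.bdd_mul (f := fun x => |ρ x|)
      (g := fun x => abs (Real.log |z - x|) + (Real.log (|z - x| + 1) + Real.pi))
      h1 (hcont.abs.aestronglyMeasurable.restrict)
      (ae_of_all _ fun x => by rw [Real.norm_eq_abs, abs_abs]; exact (Real.norm_eq_abs (ρ x)) ▸ hC x)
    simpa [add_assoc] using this
  · filter_upwards [hzne] with x hx
    have hcz : z - x ≠ 0 := sub_ne_zero.mpr (Ne.symm hx)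
    have hlim := (log_tendsto_upper (z - x) hcz).const_mul (ρ x : ℂ)
    have hfun : ∀ ε : ℝ,
        (z : ℂ) + (ε:ℂ) * Complex.I - (x:ℂ) = ((z - x : ℝ) : ℂ) + (ε:ℂ) * Complex.I := by
      intro ε; push_cast; ring
    have hiff : (z - x < 0) = (z < x) := by simp [sub_neg]
    simp only [hfun, hiff] at hlim ⊢
    exact hlim

lemma limit_eval (ρ : ℝ → ℝ) (hcont : Continuous ρ) (hsupp : ∀ x, x ∉ E → ρ x = 0) (z : ℝ) :
    (∫ x in E, (ρ x : ℂ) *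
        ((Real.log |z - x| : ℂ) + if z < x then (Real.pi : ℂ) * Complex.I else 0))
      = ((∫ x in E, Real.log |z - x| * ρ x : ℝ) : ℂ)
        + (Real.pi : ℂ) * ((∫ x in E ∩ Ioi z, ρ x : ℝ) : ℂ) * Complex.I := by
  have hf : IntegrableOn (fun x => ((Real.log |z - x| * ρ x : ℝ) : ℂ)) E volume :=
    (IntOn_log_mul z ρ hcont hsupp).ofReal
  have hg0 : IntegrableOn (fun x => (ρ x : ℂ) * ((Real.pi : ℂ) * Complex.I)) E volume :=
    ((hcont.integrableOn_Icc (a := -Real.sqrt 2) (b := Real.sqrt 2)).ofReal (𝕜 := ℂ)).mul_const _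
  have hg : IntegrableOn
      (fun x => Set.indicator (Ioi z) (fun x => (ρ x : ℂ) * ((Real.pi : ℂ) * Complex.I)) x)
      E volume := hg0.indicator measurableSet_Ioi
  have hcongr : ∀ x ∈ E, (ρ x : ℂ) *
        ((Real.log |z - x| : ℂ) + if z < x then (Real.pi : ℂ) * Complex.I else 0)
      = ((Real.log |z - x| * ρ x : ℝ) : ℂ)
        + Set.indicator (Ioi z) (fun x => (ρ x : ℂ) * ((Real.pi : ℂ) * Complex.I)) x := by
    intro x _
    by_cases h : z < x
    · rw [if_pos h, Set.indicator_of_mem (mem_Ioi.mpr h)]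
      push_cast; ring
    · rw [if_neg h, Set.indicator_of_notMem (by simpa using h)]
      push_cast; ring
  have e1 : (∫ x in E, ((Real.log |z - x| * ρ x : ℝ) : ℂ))
      = ((∫ x in E, Real.log |z - x| * ρ x : ℝ) : ℂ) := integral_ofReal
  have e2 : (∫ x in E ∩ Ioi z, ((ρ x : ℝ) : ℂ)) = ((∫ x in E ∩ Ioi z, ρ x : ℝ) : ℂ) :=
    integral_ofReal
  rw [setIntegral_congr_fun hE_meas hcongr, integral_add hf hg, e1,
    setIntegral_indicator measurableSet_Ioi, integral_mul_const, e2]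
  ring

lemma gfun_conj (ρ : ℝ → ℝ) (z : ℝ) (ε : ℝ) (hε : 0 < ε) :
    gfun ρ ((z : ℂ) - (ε : ℂ) * Complex.I)
      = (starRingEnd ℂ) (gfun ρ ((z : ℂ) + (ε : ℂ) * Complex.I)) := by
  rw [gfun, gfun, ← integral_conj]
  refine setIntegral_congr_fun hE_meas fun x _ => ?_
  have harg : ((z : ℂ) + (ε : ℂ) * Complex.I - (x : ℂ)).arg ≠ Real.pi := by
    intro h
    have him := (Complex.arg_eq_pi_iff.mp h).2
    simp at him
    exact hε.ne' him
  have hw : (z : ℂ) - (ε : ℂ) * Complex.I - (x : ℂ)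
      = (starRingEnd ℂ) ((z : ℂ) + (ε : ℂ) * Complex.I - (x : ℂ)) := by
    simp [map_sub, map_add, map_mul, Complex.conj_ofReal, Complex.conj_I]
    ring
  rw [hw, Complex.log_conj _ harg, map_mul, Complex.conj_ofReal]

/-- One-sided boundary values of the g-function on the real line: for real `z ≠ ±√2`
the limits `g±(z) = lim_{ε↓0} g(z ± iε)` exist, and they are given by
`∫_E ln|z-x| ρ ± iπ∫_E ρ` for `z < -√2`, by `∫_E ln|z-x| ρ ± iπ∫_z^{√2} ρ` for
`-√2 < z < √2`, and by `∫_E ln|z-x| ρ` for `z > √2`. -/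
theorem gfun_boundary_values (ρ : ℝ → ℝ) (hcont : Continuous ρ)
    (hnonneg : ∀ x, 0 ≤ ρ x) (hsupp : ∀ x, x ∉ E → ρ x = 0)
    (z : ℝ) (hz1 : z ≠ Real.sqrt 2) (hz2 : z ≠ -Real.sqrt 2) :
    (z < -Real.sqrt 2 →
      Tendsto (fun ε : ℝ => gfun ρ ((z : ℂ) + (ε : ℂ) * Complex.I)) (𝓝[>] 0)
        (𝓝 (((∫ x in E, Real.log |z - x| * ρ x : ℝ) : ℂ)
          + (Real.pi : ℂ) * ((∫ x in E, ρ x : ℝ) : ℂ) * Complex.I)) ∧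
      Tendsto (fun ε : ℝ => gfun ρ ((z : ℂ) - (ε : ℂ) * Complex.I)) (𝓝[>] 0)
        (𝓝 (((∫ x in E, Real.log |z - x| * ρ x : ℝ) : ℂ)
          - (Real.pi : ℂ) * ((∫ x in E, ρ x : ℝ) : ℂ) * Complex.I))) ∧
    (z ∈ Ioo (-Real.sqrt 2) (Real.sqrt 2) →
      Tendsto (fun ε : ℝ => gfun ρ ((z : ℂ) + (ε : ℂ) * Complex.I)) (𝓝[>] 0)
        (𝓝 (((∫ x in E, Real.log |z - x| * ρ x : ℝ) : ℂ)
          + (Real.pi : ℂ) * ((∫ x in z..Real.sqrt 2, ρ x : ℝ) : ℂ) * Complex.I)) ∧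
      Tendsto (fun ε : ℝ => gfun ρ ((z : ℂ) - (ε : ℂ) * Complex.I)) (𝓝[>] 0)
        (𝓝 (((∫ x in E, Real.log |z - x| * ρ x : ℝ) : ℂ)
          - (Real.pi : ℂ) * ((∫ x in z..Real.sqrt 2, ρ x : ℝ) : ℂ) * Complex.I))) ∧
    (Real.sqrt 2 < z →
      Tendsto (fun ε : ℝ => gfun ρ ((z : ℂ) + (ε : ℂ) * Complex.I)) (𝓝[>] 0)
        (𝓝 (((∫ x in E, Real.log |z - x| * ρ x : ℝ) : ℂ))) ∧
      Tendsto (fun ε : ℝ => gfun ρ ((z : ℂ) - (ε : ℂ) * Complex.I)) (𝓝[>] 0)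
        (𝓝 (((∫ x in E, Real.log |z - x| * ρ x : ℝ) : ℂ)))) := by
  have hplus : Tendsto (fun ε : ℝ => gfun ρ ((z : ℂ) + (ε : ℂ) * Complex.I)) (𝓝[>] 0)
      (𝓝 (((∫ x in E, Real.log |z - x| * ρ x : ℝ) : ℂ)
        + (Real.pi : ℂ) * ((∫ x in E ∩ Ioi z, ρ x : ℝ) : ℂ) * Complex.I)) := by
    have h := tendsto_plus ρ hcont hsupp z
    rwa [limit_eval ρ hcont hsupp z] at h
  have hminus : Tendsto (fun ε : ℝ => gfun ρ ((z : ℂ) - (ε : ℂ) * Complex.I)) (𝓝[>] 0)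
      (𝓝 (((∫ x in E, Real.log |z - x| * ρ x : ℝ) : ℂ)
        - (Real.pi : ℂ) * ((∫ x in E ∩ Ioi z, ρ x : ℝ) : ℂ) * Complex.I)) := by
    have hconjL : (starRingEnd ℂ) (((∫ x in E, Real.log |z - x| * ρ x : ℝ) : ℂ)
        + (Real.pi : ℂ) * ((∫ x in E ∩ Ioi z, ρ x : ℝ) : ℂ) * Complex.I)
        = ((∫ x in E, Real.log |z - x| * ρ x : ℝ) : ℂ)
          - (Real.pi : ℂ) * ((∫ x in E ∩ Ioi z, ρ x : ℝ) : ℂ) * Complex.I := by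
      simp [map_add, map_mul, Complex.conj_ofReal, Complex.conj_I]
      ring
    have h := ((Complex.continuous_conj).tendsto _).comp hplus
    rw [hconjL] at h
    refine Tendsto.congr' ?_ h
    filter_upwards [self_mem_nhdsWithin] with ε hε
    exact (gfun_conj ρ z ε (mem_Ioi.mp hε)).symm
  refine ⟨fun hlt => ?_, fun hmem => ?_, fun hgt => ?_⟩
  · have hset : E ∩ Ioi z = E := by
      refine inter_eq_left.mpr fun x hx => ?_
      exact mem_Ioi.mpr (lt_of_lt_of_le hlt hx.1)
    rw [hset] at hplus hminus
    exact ⟨hplus, hminus⟩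
  · have hset : E ∩ Ioi z = Ioc z (Real.sqrt 2) := by
      ext x
      simp only [E, mem_inter_iff, mem_Icc, mem_Ioi, mem_Ioc]
      constructor
      · rintro ⟨⟨h1, h2⟩, h3⟩; exact ⟨h3, h2⟩
      · rintro ⟨h3, h2⟩; exact ⟨⟨(hmem.1.trans h3).le, h2⟩, h3⟩
    have hIoc : (∫ x in Ioc z (Real.sqrt 2), ρ x) = ∫ x in z..Real.sqrt 2, ρ x :=
      (intervalIntegral.integral_of_le hmem.2.le).symm
    rw [hset, hIoc] at hplus hminus
    exact ⟨hplus, hminus⟩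
  · have hset : E ∩ Ioi z = ∅ := by
      ext x
      simp only [E, mem_inter_iff, mem_Icc, mem_Ioi, mem_empty_iff_false, iff_false, not_and]
      rintro ⟨h1, h2⟩ h3
      linarith
    rw [hset] at hplus hminus
    simp only [Measure.restrict_empty, integral_zero_measure, Complex.ofReal_zero, mul_zero,
      zero_mul, add_zero, sub_zero] at hplus hminus
    exact ⟨hplus, hminus⟩
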